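/- Let P be a nonempty compact convex subset of ℝⁿ, f, g : ℝⁿ → ℝ convex and differentiable, with curvature-type constant C_F ≥ 0 for F = f + g, and x⋆ ∈ P a minimizer of F over P. Fix x_k ∈ P, let s_k minimize u ↦ ⟨∇f(x_k), u − x_k⟩ + g(u) − g(x_k) over P, α ∈ [0,1], x_{k+1} = x_k + α(s_k − x_k), and h(x) = F(x) − F(x⋆). Then h(x_{k+1}) + α[g(s_k) − g(x_k)] ≤ (1 − α) h(x_k) + α⟨∇g(x_k), s_k − x_k⟩ + (C_F/2)α². -/

import Mathlib

open RealInnerProductSpace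

lemma inner_gradient_eq {E : Type*} [NormedAddCommGroup E] [InnerProductSpace ℝ E]
    [CompleteSpace E] (f : E → ℝ) (x v : E) :
    ⟪gradient f x, v⟫ = fderiv ℝ f x v := by
  rw [gradient, InnerProductSpace.toDual_symm_apply]

lemma convex_grad_ineq {E : Type*} [NormedAddCommGroup E] [InnerProductSpace ℝ E]
    [CompleteSpace E] {f : E → ℝ} (hf : ConvexOn ℝ Set.univ f)
    (hfd : Differentiable ℝ f) (x y : E) :
    f x + ⟪gradient f x, y - x⟫ ≤ f y := by
  rw [inner_gradient_eq]
  set φ : ℝ → ℝ := fun t => f (x + t • (y - x)) with hφ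
  have hline : ∀ t : ℝ, HasDerivAt (fun s : ℝ => x + s • (y - x)) (y - x) t := by
    intro t
    simpa using ((hasDerivAt_id t).smul_const (y - x)).const_add x
  have hder : HasDerivAt φ (fderiv ℝ f x (y - x)) 0 := by
    have := (hfd (x + (0:ℝ) • (y - x))).hasFDerivAt.comp_hasDerivAt 0 (hline 0)
    simp only [zero_smul, add_zero] at this
    exact this
  have hconv : ConvexOn ℝ Set.univ φ := by
    have A : ConvexOn ℝ (((AffineMap.lineMap x y : ℝ →ᵃ[ℝ] E)) ⁻¹' Set.univ)
        (f ∘ (AffineMap.lineMap x y : ℝ →ᵃ[ℝ] E)) := hf.comp_affineMap _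
    have heq : φ = f ∘ (AffineMap.lineMap x y : ℝ →ᵃ[ℝ] E) :=
      funext fun t => by simp [hφ, AffineMap.lineMap_apply, add_comm]
    rw [heq]
    simpa using A
  have hslope := hconv.le_slope_of_hasDerivAt (Set.mem_univ (0:ℝ)) (Set.mem_univ (1:ℝ))
    one_pos hder
  have : slope φ 0 1 = f y - f x := by
    simp [slope, hφ]
  rw [this] at hslope
  linarith

/-- intermediate inequality of the rate proof: with `h x = F x - F x⋆`,
`s_k` minimizing the partially linearized map at `x_k ∈ P` over `P`, `α ∈ [0,1]`, and
`x_{k+1} = x_k + α (s_k - x_k)`: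
`h x_{k+1} + α (g s_k - g x_k) ≤ (1 - α) h x_k + α ⟪∇g x_k, s_k - x_k⟫ + (C_F/2) α²`. -/
theorem stmt_17 (n : ℕ) (P : Set (EuclideanSpace ℝ (Fin n)))
    (hPne : P.Nonempty) (hPcpt : IsCompact P) (hPconv : Convex ℝ P)
    (f g : EuclideanSpace ℝ (Fin n) → ℝ)
    (hfconv : ConvexOn ℝ Set.univ f) (hgconv : ConvexOn ℝ Set.univ g)
    (hfdiff : Differentiable ℝ f) (hgdiff : Differentiable ℝ g)
    (CF : ℝ) (hCF : 0 ≤ CF)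
    (hcurv : ∀ x ∈ P, ∀ y ∈ P, ∀ α ∈ Set.Icc (0 : ℝ) 1,
      f ((1 - α) • x + α • y) + g ((1 - α) • x + α • y) ≤
        f x + g x + α * ⟪gradient (fun z => f z + g z) x, y - x⟫ + CF / 2 * α ^ 2)
    (xstar : EuclideanSpace ℝ (Fin n)) (hxstar : xstar ∈ P)
    (hmin : IsMinOn (fun x => f x + g x) P xstar)
    (xk : EuclideanSpace ℝ (Fin n)) (hxk : xk ∈ P)
    (sk : EuclideanSpace ℝ (Fin n)) (hsk : sk ∈ P)
    (hskmin : IsMinOn (fun u => ⟪gradient f xk, u - xk⟫ + g u - g xk) P sk)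
    (α : ℝ) (hα : α ∈ Set.Icc (0 : ℝ) 1) :
    ((f (xk + α • (sk - xk)) + g (xk + α • (sk - xk))) - (f xstar + g xstar))
        + α * (g sk - g xk) ≤
      (1 - α) * ((f xk + g xk) - (f xstar + g xstar))
        + α * ⟪gradient g xk, sk - xk⟫ + CF / 2 * α ^ 2 := by
  obtain ⟨hα0, hα1⟩ := hα
  set v := sk - xk
  have hxk1 : xk + α • (sk - xk) = (1 - α) • xk + α • sk := by
    rw [sub_smul, smul_sub, one_smul]; abel
  have h1 := hcurv xk hxk sk hsk α ⟨hα0, hα1⟩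
  rw [← hxk1] at h1
  have hgradsum : ⟪gradient (fun z => f z + g z) xk, sk - xk⟫ =
      ⟪gradient f xk, sk - xk⟫ + ⟪gradient g xk, sk - xk⟫ := by
    rw [inner_gradient_eq, inner_gradient_eq, inner_gradient_eq]
    rw [fderiv_fun_add (hfdiff xk) (hgdiff xk)]
    simp
  rw [hgradsum] at h1
  have h2 : ⟪gradient f xk, sk - xk⟫ + g sk - g xk ≤
      ⟪gradient f xk, xstar - xk⟫ + g xstar - g xk := hskmin hxstar
  have h3 : f xk + ⟪gradient f xk, xstar - xk⟫ ≤ f xstar :=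
    convex_grad_ineq hfconv hfdiff xk xstar
  have key : ⟪gradient f xk, sk - xk⟫ + g sk - g xk ≤
      (f xstar + g xstar) - (f xk + g xk) := by linarith
  have key2 : α * (⟪gradient f xk, sk - xk⟫ + g sk - g xk) ≤
      α * ((f xstar + g xstar) - (f xk + g xk)) :=
    mul_le_mul_of_nonneg_left key hα0
  nlinarith [h1]
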